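/- Let Δ_1, Δ_2, Δ_3 be real numbers with Δ_1 + Δ_2 + Δ_3 = 0, and suppose sin((Δ_1 − Δ_2)/2) ≠ 0, sin((Δ_2 − Δ_3)/2) ≠ 0, sin((Δ_3 − Δ_1)/2) ≠ 0. Define ψ_1 = sin³(Δ_1/2) / (sin((Δ_1 − Δ_2)/2)·sin((Δ_3 − Δ_1)/2)), ψ_2 = sin³(Δ_2/2) / (sin((Δ_2 − Δ_3)/2)·sin((Δ_1 − Δ_2)/2)), and ψ_3 = sin³(Δ_3/2) / (sin((Δ_3 − Δ_1)/2)·sin((Δ_2 − Δ_3)/2)). Then ψ_1 + ψ_2 + ψ_3 = 0. -/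

import Mathlib

lemma koopman_key (x y : ℝ) :
    Real.sin x ^ 3 * Real.sin (x + 2*y) - Real.sin y ^ 3 * Real.sin (2*x + y)
      - Real.sin (x + y) ^ 3 * Real.sin (x - y) = 0 := by
  have hx := Real.sin_sq_add_cos_sq x
  have hy := Real.sin_sq_add_cos_sq y
  simp only [show x + 2*y = (x + y) + y from by ring,
    show 2*x + y = x + (x + y) from by ring,
    Real.sin_add, Real.sin_sub, Real.cos_add]
  linear_combination
    (2*Real.sin x*Real.cos x*Real.sin y^3*Real.cos y + Real.cos x^2*Real.sin y^4
      - Real.sin x^2*Real.sin y^4) * hx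
    + (-(Real.sin x^4*Real.cos y^2) + Real.sin x^4*Real.sin y^2
      - 2*Real.sin x^3*Real.cos x*Real.sin y*Real.cos y) * hy

lemma koopman_aux (x y : ℝ)
    (h12 : Real.sin (x - y) ≠ 0) (h23 : Real.sin (x + 2*y) ≠ 0)
    (h31 : Real.sin (2*x + y) ≠ 0) :
    Real.sin x ^ 3 / (Real.sin (x - y) * -Real.sin (2*x + y))
      + Real.sin y ^ 3 / (Real.sin (x + 2*y) * Real.sin (x - y))
      + (-Real.sin (x + y)) ^ 3 / (-Real.sin (2*x + y) * Real.sin (x + 2*y)) = 0 := by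
  have key := koopman_key x y
  have : Real.sin x ^ 3 / (Real.sin (x - y) * -Real.sin (2*x + y))
      + Real.sin y ^ 3 / (Real.sin (x + 2*y) * Real.sin (x - y))
      + (-Real.sin (x + y)) ^ 3 / (-Real.sin (2*x + y) * Real.sin (x + 2*y))
      = (Real.sin x ^ 3 * Real.sin (x + 2*y) - Real.sin y ^ 3 * Real.sin (2*x + y)
          - Real.sin (x + y) ^ 3 * Real.sin (x - y))
        / (-(Real.sin (x - y) * Real.sin (x + 2*y) * Real.sin (2*x + y))) := by
    rw [div_add_div _ _ (mul_ne_zero h12 (neg_ne_zero.mpr h31)) (mul_ne_zero h23 h12),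
      div_add_div _ _ (mul_ne_zero (mul_ne_zero h12 (neg_ne_zero.mpr h31)) (mul_ne_zero h23 h12))
        (mul_ne_zero (neg_ne_zero.mpr h31) h23),
      div_eq_div_iff (mul_ne_zero (mul_ne_zero (mul_ne_zero h12 (neg_ne_zero.mpr h31))
        (mul_ne_zero h23 h12)) (mul_ne_zero (neg_ne_zero.mpr h31) h23))
        (neg_ne_zero.mpr (mul_ne_zero (mul_ne_zero h12 h23) h31))]
    ring
  rw [this, key, zero_div]

/-- For real `Δ₁ + Δ₂ + Δ₃ = 0` with nonvanishing pairwise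
half-difference sines, the Koopman eigenfunctions satisfy `ψ₁ + ψ₂ + ψ₃ = 0`. -/
theorem koopman_eigenfunctions_sum_zero
    (Δ1 Δ2 Δ3 : ℝ) (hsum : Δ1 + Δ2 + Δ3 = 0)
    (h12 : Real.sin ((Δ1 - Δ2) / 2) ≠ 0)
    (h23 : Real.sin ((Δ2 - Δ3) / 2) ≠ 0)
    (h31 : Real.sin ((Δ3 - Δ1) / 2) ≠ 0)
    (ψ1 ψ2 ψ3 : ℝ)
    (hψ1 : ψ1 = Real.sin (Δ1 / 2) ^ 3
      / (Real.sin ((Δ1 - Δ2) / 2) * Real.sin ((Δ3 - Δ1) / 2)))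
    (hψ2 : ψ2 = Real.sin (Δ2 / 2) ^ 3
      / (Real.sin ((Δ2 - Δ3) / 2) * Real.sin ((Δ1 - Δ2) / 2)))
    (hψ3 : ψ3 = Real.sin (Δ3 / 2) ^ 3
      / (Real.sin ((Δ3 - Δ1) / 2) * Real.sin ((Δ2 - Δ3) / 2))) :
    ψ1 + ψ2 + ψ3 = 0 := by
  have h3 : Δ3 = -Δ1 - Δ2 := by linarith
  subst h3
  set x := Δ1 / 2 with hxdef
  set y := Δ2 / 2 with hydef
  have e1 : (Δ1 - Δ2) / 2 = x - y := by rw [hxdef, hydef]; ring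
  have e2 : (Δ2 - (-Δ1 - Δ2)) / 2 = x + 2*y := by rw [hxdef, hydef]; ring
  have e3 : ((-Δ1 - Δ2) - Δ1) / 2 = -(2*x + y) := by rw [hxdef, hydef]; ring
  have e4 : (-Δ1 - Δ2) / 2 = -(x + y) := by rw [hxdef, hydef]; ring
  rw [e1] at h12 hψ1 hψ2
  rw [e2] at h23 hψ2 hψ3
  rw [e3] at h31 hψ1 hψ3
  rw [e4] at hψ3
  simp only [Real.sin_neg] at h31 hψ1 hψ3
  have h31' : Real.sin (2*x + y) ≠ 0 := fun h => h31 (by rw [h, neg_zero])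
  rw [hψ1, hψ2, hψ3]
  exact koopman_aux x y h12 h23 h31'
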